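/- If S is a blocking semioval with exactly 25 points in PG(2,11), then no line of PG(2,11) meets S in exactly 7, 8, 9, or 11 points. -/

import Mathlib

instance : Fact (Nat.Prime 11) := ⟨by norm_num⟩

/-- The points of `PG(2,11)`: the projectivization of `(ZMod 11)^3`. -/
abbrev PGPoint : Type := Projectivization (ZMod 11) (Fin 3 → ZMod 11)

/-- The lines of `PG(2,11)`: the 2-dimensional subspaces of `(ZMod 11)^3`. -/
abbrev PGLine : Type :=
  {W : Submodule (ZMod 11) (Fin 3 → ZMod 11) // Module.finrank (ZMod 11) W = 2}

/-- Incidence: a point lies on a line when its representing 1-dimensional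
subspace is contained in the line's 2-dimensional subspace. -/
def PGmem (P : PGPoint) (L : PGLine) : Prop := Projectivization.submodule P ≤ L.val

/-- The set of points lying on a line. -/
def linePts (L : PGLine) : Set PGPoint := {P | PGmem P L}

/-- The set of points of `S` lying on the line `L`. -/
def secantPts (S : Set PGPoint) (L : PGLine) : Set PGPoint := {P ∈ S | PGmem P L}

/-- A line is a `k`-secant to `S` if it meets `S` in exactly `k` points. -/
def IsSecant (S : Set PGPoint) (k : ℕ) (L : PGLine) : Prop := (secantPts S L).ncard = k

/-- A tangent line to `S` is a 1-secant. -/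
def IsTangent (S : Set PGPoint) (L : PGLine) : Prop := IsSecant S 1 L

/-- A blocking set: every line meets `S`, but `S` contains no line. -/
def IsBlockingSet (S : Set PGPoint) : Prop :=
  (∀ L : PGLine, (secantPts S L).Nonempty) ∧ ∀ L : PGLine, ¬ linePts L ⊆ S

/-- A semioval: every point of `S` lies on exactly one tangent line to `S`. -/
def IsSemioval (S : Set PGPoint) : Prop :=
  ∀ P ∈ S, ∃! L : PGLine, PGmem P L ∧ IsTangent S L

/-- A blocking semioval is both a blocking set and a semioval. -/
def IsBlockingSemioval (S : Set PGPoint) : Prop := IsBlockingSet S ∧ IsSemioval S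


open Module Projectivization

local notation "K" => ZMod 11
local notation "V" => Fin 3 → ZMod 11

noncomputable def projEquiv {W W' : Type*} [AddCommGroup W] [Module K W] [AddCommGroup W']
    [Module K W'] (e : W ≃ₗ[K] W') : Projectivization K W ≃ Projectivization K W' := by
  refine Equiv.ofBijective (Projectivization.map (σ := RingHom.id K) e.toLinearMap e.injective)
    ⟨Projectivization.map_injective _ _, ?_⟩
  intro y
  induction y using Projectivization.ind with
  | h v hv =>
    refine ⟨Projectivization.mk K (e.symm v) (by simp [hv]), ?_⟩
    rw [Projectivization.map_mk]
    simp

lemma card_proj_line : Nat.card (Projectivization K (Fin 2 → K)) = 12 := by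
  have hf : Function.Bijective (fun o : Option K =>
      Option.elim o (Projectivization.mk K ![1, 0] (by
        intro h; exact one_ne_zero (congrFun h 0)))
        (fun x => Projectivization.mk K ![x, 1] (by
          intro h; exact one_ne_zero (congrFun h 1)))) := by
    constructor
    · rintro (_|x) (_|y) h <;> simp only [Option.elim] at h
      · rfl
      · exfalso
        rw [mk_eq_mk_iff'] at h
        obtain ⟨a, ha⟩ := h
        have h1 := congrFun ha 1
        have h0 := congrFun ha 0
        simp at h1 h0
        subst h1
        simp at h0
      · exfalso
        rw [mk_eq_mk_iff'] at h
        obtain ⟨a, ha⟩ := h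
        have h1 := congrFun ha 1
        simp at h1
      · rw [mk_eq_mk_iff'] at h
        obtain ⟨a, ha⟩ := h
        have h1 := congrFun ha 1
        have h0 := congrFun ha 0
        simp at h1 h0
        subst h1
        simp at h0
        simp [h0]
    · intro P
      induction P using Projectivization.ind with
      | h v hv =>
        by_cases h1 : v 1 = 0
        · refine ⟨none, ?_⟩
          have h0 : v 0 ≠ 0 := by
            intro h0
            apply hv
            funext i
            fin_cases i <;> assumption
          simp only [Option.elim]
          symm
          rw [mk_eq_mk_iff']
          exact ⟨v 0, by funext i; fin_cases i <;> simp [h1]⟩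
        · refine ⟨some (v 0 / v 1), ?_⟩
          simp only [Option.elim]
          symm
          rw [mk_eq_mk_iff']
          refine ⟨v 1, ?_⟩
          funext i
          fin_cases i <;> simp [h1]
          field_simp
  have := Nat.card_congr (Equiv.ofBijective _ hf)
  rw [← this]
  simp [Nat.card_eq_fintype_card]

lemma card_proj_two {W : Type*} [AddCommGroup W] [Module K W] [FiniteDimensional K W]
    (h : finrank K W = 2) : Nat.card (Projectivization K W) = 12 := by
  have e : W ≃ₗ[K] (Fin 2 → K) := LinearEquiv.ofFinrankEq _ _ (by simp [h])
  rw [Nat.card_congr (projEquiv e), card_proj_line]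
instance : Finite (Submodule K V) := Finite.of_injective _ SetLike.coe_injective
instance : Finite PGPoint := Quotient.finite _
instance : Finite PGLine := Subtype.finite

-- G1
lemma exists_unique_point_of_submodule (W : Submodule K V) (h : finrank K W = 1) :
    ∃! P : PGPoint, Projectivization.submodule P = W := by
  refine ⟨Projectivization.mk'' W h, Projectivization.submodule_mk'' W h, ?_⟩
  intro P hP
  apply Projectivization.submodule_injective
  rw [hP, Projectivization.submodule_mk'' W h]

-- G2
lemma exists_unique_line (P Q : PGPoint) (h : P ≠ Q) : ∃! L : PGLine, PGmem P L ∧ PGmem Q L := by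
  have hPQ : Projectivization.submodule P ≠ Projectivization.submodule Q :=
    fun hc => h (Projectivization.submodule_injective hc)
  have hrk : finrank K ↥(Projectivization.submodule P ⊔ Projectivization.submodule Q) = 2 := by
    have h1 := Submodule.finrank_sup_add_finrank_inf_eq
      (Projectivization.submodule P) (Projectivization.submodule Q)
    rw [P.finrank_submodule, Q.finrank_submodule] at h1
    have hlt : Projectivization.submodule P ⊓ Projectivization.submodule Q
        < Projectivization.submodule P := by
      refine lt_of_le_of_ne inf_le_left (fun hc => ?_)
      have : Projectivization.submodule P ≤ Projectivization.submodule Q := by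
        rw [← hc]; exact inf_le_right
      exact hPQ (Submodule.eq_of_le_of_finrank_eq this
        (by rw [P.finrank_submodule, Q.finrank_submodule]))
    have := Submodule.finrank_lt_finrank_of_lt hlt
    rw [P.finrank_submodule] at this
    omega
  refine ⟨⟨_, hrk⟩, ⟨le_sup_left, le_sup_right⟩, ?_⟩
  rintro ⟨L, hL⟩ ⟨h1, h2⟩
  have : Projectivization.submodule P ⊔ Projectivization.submodule Q ≤ L := sup_le h1 h2
  exact Subtype.ext (Submodule.eq_of_le_of_finrank_eq this (by rw [hL, hrk])).symm

-- G3
lemma exists_unique_inter (L L' : PGLine) (h : L ≠ L') : ∃! P : PGPoint, PGmem P L ∧ PGmem P L' := by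
  have hne : L.val ≠ L'.val := fun hc => h (Subtype.ext hc)
  have hrk : finrank K ↥(L.val ⊓ L'.val) = 1 := by
    have h1 := Submodule.finrank_sup_add_finrank_inf_eq L.val L'.val
    rw [L.prop, L'.prop] at h1
    have hlt : L.val < L.val ⊔ L'.val := by
      refine lt_of_le_of_ne le_sup_left (fun hc => ?_)
      have : L'.val ≤ L.val := by rw [hc]; exact le_sup_right
      exact hne (Submodule.eq_of_le_of_finrank_eq this (by rw [L.prop, L'.prop])).symm
    have h2 := Submodule.finrank_lt_finrank_of_lt hlt
    have h3 : finrank K ↥(L.val ⊔ L'.val) ≤ 3 := by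
      have := Submodule.finrank_le (L.val ⊔ L'.val)
      simpa using this
    rw [L.prop] at h2
    omega
  obtain ⟨P, hP, hPu⟩ := exists_unique_point_of_submodule _ hrk
  refine ⟨P, ⟨?_, ?_⟩, ?_⟩
  · rw [PGmem, hP]; exact inf_le_left
  · rw [PGmem, hP]; exact inf_le_right
  · intro Q ⟨h1, h2⟩
    have hle : Projectivization.submodule Q ≤ L.val ⊓ L'.val := le_inf h1 h2
    have : Projectivization.submodule Q = L.val ⊓ L'.val :=
      Submodule.eq_of_le_of_finrank_eq hle (by rw [Q.finrank_submodule, hrk])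
    exact hPu Q this

-- G4
lemma ncard_linePts (L : PGLine) : (linePts L).ncard = 12 := by
  have hinj : Function.Injective (L.val.subtype) := Subtype.coe_injective
  let f : Projectivization K ↥L.val → PGPoint :=
    Projectivization.map (σ := RingHom.id _) L.val.subtype hinj
  have hmem : ∀ x, f x ∈ linePts L := by
    intro x
    induction x using Projectivization.ind with
    | h v hv =>
      show PGmem _ _
      rw [PGmem]
      have : f (Projectivization.mk K v hv)
          = Projectivization.mk K (v : V) (by simpa using fun h => hv (Subtype.ext h)) :=
        Projectivization.map_mk _ _ _ _
      rw [this, Projectivization.submodule_mk, Submodule.span_singleton_le_iff_mem]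
      exact v.2
  let g : Projectivization K ↥L.val → ↥(linePts L) := fun x => ⟨f x, hmem x⟩
  have hbij : Function.Bijective g := by
    constructor
    · intro x y hxy
      exact Projectivization.map_injective L.val.subtype hinj (congrArg Subtype.val hxy)
    · rintro ⟨P, hP⟩
      induction P using Projectivization.ind with
      | h v hv =>
        have hvL : v ∈ L.val := by
          have : PGmem (Projectivization.mk K v hv) L := hP
          rw [PGmem, Projectivization.submodule_mk, Submodule.span_singleton_le_iff_mem] at this
          exact this
        refine ⟨Projectivization.mk K (⟨v, hvL⟩ : ↥L.val) (fun h => hv (congrArg Subtype.val h)), ?_⟩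
        apply Subtype.ext
        exact Projectivization.map_mk L.val.subtype hinj _ _
  have h1 : Nat.card ↥(linePts L) = 12 := by
    rw [← Nat.card_congr (Equiv.ofBijective g hbij)]
    exact card_proj_two L.prop
  rw [← Nat.card_coe_set_eq, h1]

-- G5
lemma ncard_linesThrough (P : PGPoint) : {M : PGLine | PGmem P M}.ncard = 12 := by
  set p := Projectivization.submodule P with hp
  have hfp : finrank (ZMod 11) p = 1 := P.finrank_submodule
  have hq3 := Submodule.finrank_quotient_add_finrank p
  have hV3 : finrank (ZMod 11) V = 3 := by simp
  have h2 : finrank (ZMod 11) (V ⧸ p) = 2 := by omega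
  have key : ∀ H : Submodule (ZMod 11) (V ⧸ p),
      finrank (ZMod 11) (Submodule.comap p.mkQ H) = finrank (ZMod 11) H + 1 := by
    intro H
    set W := Submodule.comap p.mkQ H with hW
    have hpW : p ≤ W := by
      intro x hx
      show p.mkQ x ∈ H
      rw [Submodule.mkQ_apply, (Submodule.Quotient.mk_eq_zero p).2 hx]
      exact H.zero_mem
    have hrange : LinearMap.range (p.mkQ.domRestrict W) = H := by
      rw [LinearMap.range_domRestrict]
      exact Submodule.map_comap_eq_self (by rw [Submodule.range_mkQ]; exact le_top)
    have hker : LinearMap.ker (p.mkQ.domRestrict W) = Submodule.comap W.subtype p := by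
      ext x
      simp [LinearMap.mem_ker, Submodule.Quotient.mk_eq_zero]
    have h3 := LinearMap.finrank_range_add_finrank_ker (p.mkQ.domRestrict W)
    rw [hrange, hker] at h3
    have h4 : finrank (ZMod 11) (Submodule.comap W.subtype p) = 1 := by
      rw [← Submodule.finrank_map_subtype_eq W, Submodule.map_comap_subtype,
        inf_eq_right.2 hpW, hfp]
    omega
  let e : {H : Submodule (ZMod 11) (V ⧸ p) // finrank (ZMod 11) H = 1}
      → ↥{M : PGLine | PGmem P M} := fun H =>
    ⟨⟨Submodule.comap p.mkQ H.val, by rw [key H.val, H.prop]⟩, Submodule.le_comap_mkQ p H.val⟩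
  have hbij : Function.Bijective e := by
    constructor
    · intro H H' hHH'
      have := congrArg (fun x => x.val.val) hHH'
      simp only [e] at this
      apply Subtype.ext
      exact Submodule.comap_injective_of_surjective (Submodule.mkQ_surjective p) this
    · rintro ⟨⟨M, hM⟩, hPM⟩
      have hpM : p ≤ M := hPM
      have hc : Submodule.comap p.mkQ (Submodule.map p.mkQ M) = M := by
        rw [Submodule.comap_map_mkQ, sup_eq_right.2 hpM]
      have hfrk : finrank (ZMod 11) (Submodule.map p.mkQ M) = 1 := by
        have := key (Submodule.map p.mkQ M)
        rw [hc, hM] at this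
        omega
      exact ⟨⟨Submodule.map p.mkQ M, hfrk⟩, Subtype.ext (Subtype.ext hc)⟩
  have h1 : Nat.card ↥{M : PGLine | PGmem P M} = 12 := by
    rw [← Nat.card_congr (Equiv.ofBijective e hbij), ← Nat.card_congr (equivSubmodule K (V ⧸ p))]
    exact card_proj_two h2
  rw [← Nat.card_coe_set_eq, h1]

lemma tangent_pt (S : Set PGPoint) (M : PGLine) (hM : IsTangent S M) :
    ∃ a, a ∈ S ∧ PGmem a M ∧ ∀ x ∈ S, PGmem x M → x = a := by
  obtain ⟨a, ha⟩ := Set.ncard_eq_one.mp hM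
  have haM : a ∈ secantPts S M := by rw [ha]; rfl
  exact ⟨a, haM.1, haM.2, fun x hx hxM => by
    have : x ∈ secantPts S M := ⟨hx, hxM⟩
    rwa [ha, Set.mem_singleton_iff] at this⟩

lemma tangent_count (S : Set PGPoint) (hS : IsSemioval S) (hcard : S.ncard = 25) :
    {M : PGLine | IsTangent S M}.ncard = 25 := by
  classical
  set TS := {M : PGLine | IsTangent S M} with hTS
  let φ : PGLine → PGPoint := fun M =>
    if h : ∃ a, a ∈ S ∧ PGmem a M ∧ ∀ x ∈ S, PGmem x M → x = a then h.choose
    else Classical.arbitrary PGPoint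
  have hφ : ∀ M ∈ TS, (φ M ∈ S ∧ PGmem (φ M) M ∧ ∀ x ∈ S, PGmem x M → x = φ M) := by
    intro M hM
    have h := tangent_pt S M hM
    simp only [φ, dif_pos h]
    exact h.choose_spec
  have hinj : Set.InjOn φ TS := by
    intro M hM M' hM' hMM'
    obtain ⟨h1, h2, h3⟩ := hφ M hM
    obtain ⟨h1', h2', h3'⟩ := hφ M' hM'
    obtain ⟨T, -, hTu⟩ := hS (φ M) h1
    rw [hTu M ⟨h2, hM⟩, hTu M' ⟨by rw [hMM']; exact h2', hM'⟩]
  have himg : φ '' TS = S := by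
    ext P
    constructor
    · rintro ⟨M, hM, rfl⟩
      exact (hφ M hM).1
    · intro hP
      obtain ⟨T, ⟨hTm, hTt⟩, -⟩ := hS P hP
      refine ⟨T, hTt, ?_⟩
      obtain ⟨h1, h2, h3⟩ := hφ T hTt
      exact (h3 P hP hTm).symm
  rw [← Set.ncard_image_of_injOn hinj, himg, hcard]

lemma fiber_one (S : Set PGPoint) (hS : IsSemioval S) (x : PGPoint) (hx : x ∈ S) :
    {M : PGLine | IsTangent S M ∧ PGmem x M}.ncard = 1 := by
  obtain ⟨T, ⟨hTm, hTt⟩, hTu⟩ := hS x hx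
  rw [Set.ncard_eq_one]
  refine ⟨T, ?_⟩
  ext M
  simp only [Set.mem_setOf_eq, Set.mem_singleton_iff]
  exact ⟨fun ⟨h1, h2⟩ => hTu M ⟨h2, h1⟩, fun h => by subst h; exact ⟨hTt, hTm⟩⟩

lemma per_point (S : Set PGPoint) (hS : IsBlockingSemioval S)
    (L : PGLine) (k : ℕ) (hk2 : 2 ≤ k) (hcard : S.ncard = 25) (hsec : IsSecant S k L)
    (Q : PGPoint) (hQL : Q ∈ linePts L) (hQS : Q ∉ S) :
    k ≤ {M : PGLine | IsTangent S M ∧ PGmem Q M}.ncard + 3 ∧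
    {M : PGLine | IsTangent S M ∧ PGmem Q M}.ncard ≤ 11 := by
  classical
  set MQ' : Set PGLine := {M | PGmem Q M} \ {L} with hMQ'
  have hMQ'11 : MQ'.ncard = 11 := by
    have hL : L ∈ {M : PGLine | PGmem Q M} := hQL
    rw [hMQ', Set.ncard_diff_singleton_of_mem hL, ncard_linesThrough Q]
  set I : Finset PGLine := MQ'.toFinite.toFinset with hI
  have hI11 : I.card = 11 := by
    rw [← Set.ncard_eq_toFinset_card MQ' MQ'.toFinite, hMQ'11]
  -- the lines of I partition S \ L
  have hdisj : ∀ M ∈ I, ∀ M' ∈ I, M ≠ M' →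
      Disjoint ((secantPts S M).toFinite.toFinset) ((secantPts S M').toFinite.toFinset) := by
    intro M hM M' hM' hne
    rw [Finset.disjoint_left]
    intro x hx hx'
    rw [Set.Finite.mem_toFinset] at hx hx'
    rw [hI, Set.Finite.mem_toFinset, hMQ'] at hM hM'
    obtain ⟨P0, -, hPu⟩ := exists_unique_inter M M' hne
    have hxP : x = P0 := hPu x ⟨hx.2, hx'.2⟩
    have hQP : Q = P0 := hPu Q ⟨hM.1, hM'.1⟩
    exact hQS (by rw [hQP, ← hxP]; exact hx.1)
  have hcover : (S \ linePts L).toFinite.toFinset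
      = I.biUnion (fun M => (secantPts S M).toFinite.toFinset) := by
    ext P
    simp only [Set.Finite.mem_toFinset, Finset.mem_biUnion, Set.mem_diff, hI, hMQ',
      Set.mem_singleton_iff, Set.mem_setOf_eq]
    constructor
    · rintro ⟨hPS, hPL⟩
      have hPQ : P ≠ Q := fun h => hQS (h ▸ hPS)
      obtain ⟨M, ⟨hPM, hQM⟩, -⟩ := exists_unique_line P Q hPQ
      refine ⟨M, ⟨hQM, fun h => hPL (h ▸ hPM)⟩, hPS, hPM⟩
    · rintro ⟨M, ⟨hQM, hML⟩, hPS, hPM⟩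
      refine ⟨hPS, fun hPL => ?_⟩
      have hPQ : P ≠ Q := fun h => hQS (h ▸ hPS)
      obtain ⟨M0, -, hMu⟩ := exists_unique_line P Q hPQ
      exact hML ((hMu M ⟨hPM, hQM⟩).trans (hMu L ⟨hPL, hQL⟩).symm)
  have hsum : (S \ linePts L).ncard = ∑ M ∈ I, (secantPts S M).ncard := by
    rw [Set.ncard_eq_toFinset_card _ (S \ linePts L).toFinite, hcover,
      Finset.card_biUnion hdisj]
    exact Finset.sum_congr rfl fun M _ =>
      (Set.ncard_eq_toFinset_card _ (secantPts S M).toFinite).symm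
  have hdiff : (S \ linePts L).ncard + k = 25 := by
    have h1 : S \ linePts L = S \ (S ∩ linePts L) := by
      ext x; simp only [Set.mem_diff, Set.mem_inter_iff]; tauto
    have h2 : S ∩ linePts L = secantPts S L := by
      ext x; simp [secantPts, linePts, Set.mem_inter_iff, Set.mem_setOf_eq]
    rw [h1, ← hsec, ← h2, Set.ncard_diff_add_ncard_of_subset Set.inter_subset_left, hcard]
  -- tangents through Q
  have hTQ : {M : PGLine | IsTangent S M ∧ PGmem Q M}.toFinite.toFinset
      = I.filter (fun M => (secantPts S M).ncard = 1) := by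
    ext M
    simp only [Set.Finite.mem_toFinset, Finset.mem_filter, Set.mem_setOf_eq, hI, hMQ',
      Set.Finite.mem_toFinset, Set.mem_diff, Set.mem_singleton_iff]
    have hkk : (secantPts S L).ncard = k := hsec
    constructor
    · rintro ⟨ht, hQM⟩
      have h1 : (secantPts S M).ncard = 1 := ht
      have hML : M ≠ L := by
        intro h
        rw [h, hkk] at h1
        omega
      exact ⟨⟨hQM, hML⟩, h1⟩
    · rintro ⟨⟨hQM, -⟩, h1⟩
      exact ⟨h1, hQM⟩
  set t := {M : PGLine | IsTangent S M ∧ PGmem Q M}.ncard with ht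
  have htcard : t = (I.filter (fun M => (secantPts S M).ncard = 1)).card := by
    rw [ht, Set.ncard_eq_toFinset_card _ (Set.toFinite _), hTQ]
  have hsplit := Finset.card_filter_add_card_filter_not
    (s := I) (p := fun M => (secantPts S M).ncard = 1)
  have hsum1 : ∑ M ∈ I.filter (fun M => (secantPts S M).ncard = 1),
      (secantPts S M).ncard = (I.filter (fun M => (secantPts S M).ncard = 1)).card := by
    rw [Finset.sum_congr rfl (fun M hM => (Finset.mem_filter.mp hM).2), Finset.sum_const,
      smul_eq_mul, mul_one]
  have hsum2 : 2 * (I.filter (fun M => ¬ (secantPts S M).ncard = 1)).card ≤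
      ∑ M ∈ I.filter (fun M => ¬ (secantPts S M).ncard = 1), (secantPts S M).ncard := by
    have := Finset.card_nsmul_le_sum (I.filter (fun M => ¬ (secantPts S M).ncard = 1))
      (fun M => (secantPts S M).ncard) 2 (fun M hM => by
        have h1 : 0 < (secantPts S M).ncard := (Set.ncard_pos (Set.toFinite _)).mpr (hS.1.1 M)
        have h2 : ¬ (secantPts S M).ncard = 1 := (Finset.mem_filter.mp hM).2
        show 2 ≤ (secantPts S M).ncard
        omega)
    rwa [smul_eq_mul, mul_comm] at this
  have hsumsplit : ∑ M ∈ I.filter (fun M => (secantPts S M).ncard = 1), (secantPts S M).ncard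
      + ∑ M ∈ I.filter (fun M => ¬ (secantPts S M).ncard = 1), (secantPts S M).ncard
      = ∑ M ∈ I, (secantPts S M).ncard :=
    Finset.sum_filter_add_sum_filter_not I _ _
  omega

lemma main_count (S : Set PGPoint) (hS : IsBlockingSemioval S) (hcard : S.ncard = 25)
    (L : PGLine) (k : ℕ) (hk2 : 2 ≤ k) (hk11 : k ≤ 11) (hsec : IsSecant S k L) :
    ∃ t : ℕ, k + t = 25 ∧ (12 - k) * (k - 3) ≤ t ∧ t ≤ (12 - k) * 11 := by
  classical
  set J := (linePts L).toFinite.toFinset with hJ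
  have hJ12 : J.card = 12 := by
    rw [hJ, ← Set.ncard_eq_toFinset_card _ (linePts L).toFinite, ncard_linePts]
  have hkk : (secantPts S L).ncard = k := hsec
  have hLnt : ¬ IsTangent S L := by
    intro h
    have h1 : (secantPts S L).ncard = 1 := h
    omega
  set f : PGPoint → ℕ := fun x => {M : PGLine | IsTangent S M ∧ PGmem x M}.ncard with hf
  have hdisj : ∀ x ∈ J, ∀ y ∈ J, x ≠ y →
      Disjoint ({M : PGLine | IsTangent S M ∧ PGmem x M}.toFinite.toFinset)
               ({M : PGLine | IsTangent S M ∧ PGmem y M}.toFinite.toFinset) := by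
    intro x hx y hy hxy
    rw [hJ, Set.Finite.mem_toFinset] at hx hy
    rw [Finset.disjoint_left]
    intro M hM hM'
    rw [Set.Finite.mem_toFinset] at hM hM'
    obtain ⟨M0, -, hMu⟩ := exists_unique_line x y hxy
    have hML : M = L := (hMu M ⟨hM.2, hM'.2⟩).trans (hMu L ⟨hx, hy⟩).symm
    exact hLnt (hML ▸ hM.1)
  have hcover : {M : PGLine | IsTangent S M}.toFinite.toFinset
      = J.biUnion (fun x => {M : PGLine | IsTangent S M ∧ PGmem x M}.toFinite.toFinset) := by
    ext M
    simp only [Set.Finite.mem_toFinset, Finset.mem_biUnion, Set.mem_setOf_eq, hJ]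
    constructor
    · intro ht
      have hML : L ≠ M := by
        intro h
        exact hLnt (h ▸ ht)
      obtain ⟨P, ⟨hPL, hPM⟩, -⟩ := exists_unique_inter L M hML
      exact ⟨P, hPL, ht, hPM⟩
    · rintro ⟨x, -, ht, -⟩
      exact ht
  have htotal : ∑ x ∈ J, f x = 25 := by
    have h1 := tangent_count S hS.2 hcard
    rw [Set.ncard_eq_toFinset_card _ {M : PGLine | IsTangent S M}.toFinite, hcover,
      Finset.card_biUnion hdisj] at h1
    rw [← h1]
    exact Finset.sum_congr rfl fun x _ => Set.ncard_eq_toFinset_card _ _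
  -- split J into points of S and points off S
  have hJS : J.filter (fun x => x ∈ S) = (secantPts S L).toFinite.toFinset := by
    ext x
    simp only [Finset.mem_filter, Set.Finite.mem_toFinset, hJ, linePts, secantPts,
      Set.mem_setOf_eq]
    tauto
  have hJScard : (J.filter (fun x => x ∈ S)).card = k := by
    rw [hJS, ← Set.ncard_eq_toFinset_card _ (secantPts S L).toFinite, hkk]
  have hsplitcard := Finset.card_filter_add_card_filter_not
    (s := J) (p := fun x => x ∈ S)
  have hsum1 : ∑ x ∈ J.filter (fun x => x ∈ S), f x = k := by
    rw [Finset.sum_congr rfl (fun x hx => ?_), Finset.sum_const, smul_eq_mul, mul_one, hJScard]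
    exact fiber_one S hS.2 x (Finset.mem_filter.mp hx).2
  have hsumsplit : ∑ x ∈ J.filter (fun x => x ∈ S), f x
      + ∑ x ∈ J.filter (fun x => ¬ x ∈ S), f x = ∑ x ∈ J, f x :=
    Finset.sum_filter_add_sum_filter_not J _ _
  have hbounds : ∀ x ∈ J.filter (fun x => ¬ x ∈ S), k ≤ f x + 3 ∧ f x ≤ 11 := by
    intro x hx
    have h1 := Finset.mem_filter.mp hx
    have h2 : x ∈ linePts L := by
      have := h1.1
      rwa [hJ, Set.Finite.mem_toFinset] at this
    exact per_point S hS L k hk2 hcard hsec x h2 h1.2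
  have hcardQ : (J.filter (fun x => ¬ x ∈ S)).card = 12 - k := by omega
  refine ⟨∑ x ∈ J.filter (fun x => ¬ x ∈ S), f x, by omega, ?_, ?_⟩
  · have := Finset.card_nsmul_le_sum (J.filter (fun x => ¬ x ∈ S)) f (k - 3)
      (fun x hx => by have := (hbounds x hx).1; omega)
    rwa [smul_eq_mul, hcardQ] at this
  · have := Finset.sum_le_card_nsmul (J.filter (fun x => ¬ x ∈ S)) f 11
      (fun x hx => (hbounds x hx).2)
    rwa [smul_eq_mul, hcardQ] at this

theorem no_7_8_9_11_secants (S : Set PGPoint) (hS : IsBlockingSemioval S) (hcard : S.ncard = 25) (L : PGLine) :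
    ¬ IsSecant S 7 L ∧ ¬ IsSecant S 8 L ∧ ¬ IsSecant S 9 L ∧ ¬ IsSecant S 11 L := by
  refine ⟨fun h => ?_, fun h => ?_, fun h => ?_, fun h => ?_⟩
  · obtain ⟨t, h1, h2, h3⟩ := main_count S hS hcard L 7 (by norm_num) (by norm_num) h
    omega
  · obtain ⟨t, h1, h2, h3⟩ := main_count S hS hcard L 8 (by norm_num) (by norm_num) h
    omega
  · obtain ⟨t, h1, h2, h3⟩ := main_count S hS hcard L 9 (by norm_num) (by norm_num) h
    omega
  · obtain ⟨t, h1, h2, h3⟩ := main_count S hS hcard L 11 (by norm_num) (by norm_num) h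
    omega
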